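/- For all natural numbers n ≥ 1 and real parameters a, b with (1+a)n + b ≠ 0 and b/a-Pochhammer denominators nonzero, and all real x with (1+a)²x² − 4a > 0 and a ≠ 0, the Pollaczek polynomials satisfy x·P_n(x) = ((an+b)/((1+a)n+b))·P_{n+1}(x) + (n/((1+a)n+b))·P_{n-1}(x). -/

import Mathlib

/-- Rising factorial `(a)_k = a(a+1)⋯(a+k-1)`. -/
noncomputable def rf (a : ℝ) (k : ℕ) : ℝ := ∏ j ∈ Finset.range k, (a + j)

/-- `ξ = √((1+a)²x² − 4a)`. -/
noncomputable def xiP (a x : ℝ) : ℝ := Real.sqrt ((1 + a) ^ 2 * x ^ 2 - 4 * a)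

/-- `η = ((1+a)x − ξ)/(2a)`. -/
noncomputable def etaP (a x : ℝ) : ℝ := ((1 + a) * x - xiP a x) / (2 * a)

/-- The Pollaczek polynomials
`P_n(x) = η^n ∑_{k=0}^n ((-n)_k (b(x-η)/ξ)_k / ((b/a)_k k!)) (-ξ/(aη))^k`. -/
noncomputable def pollaczek (a b : ℝ) (n : ℕ) (x : ℝ) : ℝ :=
  etaP a x ^ n *
    ∑ k ∈ Finset.range (n + 1),
      rf (-(n : ℝ)) k * rf (b * (x - etaP a x) / xiP a x) k /
          (rf (b / a) k * (k.factorial : ℝ)) *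
        (-xiP a x / (a * etaP a x)) ^ k

lemma rf_succ (t : ℝ) (k : ℕ) : rf t (k + 1) = rf t k * (t + k) :=
  Finset.prod_range_succ _ _

lemma rf_succ' (t : ℝ) (k : ℕ) : rf t (k + 1) = t * rf (t + 1) k := by
  unfold rf
  rw [Finset.prod_range_succ']
  rw [Nat.cast_zero, add_zero, mul_comm]
  congr 1
  exact Finset.prod_congr rfl fun i _ => by push_cast; ring

lemma rf_shift (t : ℝ) (k : ℕ) : rf t k * (t + k) = t * rf (t + 1) k := by
  rw [← rf_succ, rf_succ']

lemma rf_neg_nat (j k : ℕ) (h : j < k) : rf (-(j : ℝ)) k = 0 :=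
  Finset.prod_eq_zero (Finset.mem_range.2 h) (by push_cast; ring)

noncomputable def gfun (a b w z : ℝ) (k : ℕ) : ℝ :=
  rf w k / (rf (b / a) k * (k.factorial : ℝ)) * z ^ k

noncomputable def Rfun (a b η : ℝ) (m : ℕ) (k : ℕ) : ℝ :=
  (k : ℝ) * (b + a * ((k : ℝ) - 1)) * η ^ 2 * rf (-((m : ℝ) + 2)) k

noncomputable def cfun (a b x η : ℝ) (m : ℕ) (k : ℕ) : ℝ :=
  ((1 + a) * ((m : ℝ) + 1) + b) * x * η * rf (-((m : ℝ) + 1)) k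
    - (a * ((m : ℝ) + 1) + b) * η ^ 2 * rf (-((m : ℝ) + 2)) k
    - ((m : ℝ) + 1) * rf (-(m : ℝ)) k

lemma grec (a b w z : ℝ) (ha : a ≠ 0) (k : ℕ)
    (hb1 : rf (b / a) k ≠ 0) (hb2 : rf (b / a) (k + 1) ≠ 0) :
    gfun a b w z (k + 1) * ((b + a * k) * ((k : ℝ) + 1)) =
      gfun a b w z k * ((w + k) * z) * a := by
  have hbk : b / a + (k : ℝ) ≠ 0 := by
    intro h
    apply hb2
    rw [rf_succ, h, mul_zero]
  have hfac : ((k.factorial : ℝ)) ≠ 0 := by positivity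
  have hk1 : ((k : ℝ) + 1) ≠ 0 := by positivity
  have hbak : b + a * k = a * (b / a + k) := by field_simp
  unfold gfun
  rw [rf_succ w, rf_succ (b / a), pow_succ]
  push_cast [Nat.factorial_succ]
  rw [hbak]
  generalize rf (b / a) k = B at hb1 ⊢
  generalize rf w k = X
  generalize (k.factorial : ℝ) = F at hfac ⊢
  generalize hd : b / a + (k : ℝ) = d at hbk ⊢
  field_simp

lemma step_lemma (a b x η w z : ℝ) (m k : ℕ) (ha : a ≠ 0)
    (hA : (1 + a) * (x * η) = a * η ^ 2 + 1)
    (hB : a * η ^ 2 * z = a * η ^ 2 - 1)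
    (hC : a * η ^ 2 * (w * z) = b * (η ^ 2 - x * η))
    (hba : ∀ j ≤ m + 2, rf (b / a) j ≠ 0) (hk : k ≤ m + 2) :
    ((m : ℝ) + 2) * (cfun a b x η m k * gfun a b w z k) =
      Rfun a b η m (k + 1) * gfun a b w z (k + 1) - Rfun a b η m k * gfun a b w z k := by
  rcases Nat.lt_or_ge k (m + 2) with hlt | hge
  · -- k ≤ m + 1
    have h2 := grec a b w z ha k (hba k (by omega)) (hba (k + 1) (by omega))
    have hbk : b / a + (k : ℝ) ≠ 0 := by
      intro h
      apply hba (k + 1) (by omega)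
      rw [rf_succ, h, mul_zero]
    have hab : b + a * (k : ℝ) ≠ 0 := by
      have : b + a * (k : ℝ) = a * (b / a + k) := by field_simp
      rw [this]
      exact mul_ne_zero ha hbk
    have hk1 : ((k : ℝ) + 1) ≠ 0 := by positivity
    have hv1 : rf (-((m : ℝ) + 2)) k * (-((m : ℝ) + 2) + k) =
        (-((m : ℝ) + 2)) * rf (-((m : ℝ) + 1)) k := by
      have h := rf_shift (-((m : ℝ) + 2)) k
      rw [show -((m : ℝ) + 2) + 1 = -((m : ℝ) + 1) by ring] at h
      exact h
    have hv0 : rf (-((m : ℝ) + 1)) k * (-((m : ℝ) + 1) + k) =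
        (-((m : ℝ) + 1)) * rf (-(m : ℝ)) k := by
      have h := rf_shift (-((m : ℝ) + 1)) k
      rw [show -((m : ℝ) + 1) + 1 = -(m : ℝ) by ring] at h
      exact h
    have hvs : rf (-((m : ℝ) + 2)) (k + 1) = rf (-((m : ℝ) + 2)) k * (-((m : ℝ) + 2) + k) :=
      rf_succ _ _
    apply mul_right_cancel₀ (mul_ne_zero hab hk1)
    unfold cfun Rfun
    push_cast
    linear_combination
      (-(((k : ℝ) + 1) * (b + a * k) * η ^ 2 * rf (-((m : ℝ) + 2)) (k + 1))) * h2
      + gfun a b w z k * ((b + a * k) * ((k : ℝ) + 1) * rf (-((m : ℝ) + 2)) k *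
          ((m : ℝ) + 2 - k) * ((m : ℝ) + 1)) * hA
      - gfun a b w z k * (((k : ℝ) + 1) * (b + a * k) * rf (-((m : ℝ) + 2)) k *
          ((k : ℝ) - (m : ℝ) - 2) * (k : ℝ)) * hB
      - gfun a b w z k * (((k : ℝ) + 1) * (b + a * k) * rf (-((m : ℝ) + 2)) k *
          ((k : ℝ) - (m : ℝ) - 2)) * hC
      - gfun a b w z k * (((k : ℝ) + 1) * (b + a * k) * η ^ 2 * ((w + k) * z) * a) * hvs
      + gfun a b w z k * ((b + a * k) * ((k : ℝ) + 1)) *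
          ((((1 + a) * ((m : ℝ) + 1) + b)) * x * η - ((m : ℝ) + 1 - k)) * hv1
      - gfun a b w z k * ((b + a * k) * ((k : ℝ) + 1)) * ((m : ℝ) + 2) * hv0
  · -- k = m + 2
    have hke : k = m + 2 := by omega
    subst hke
    have hz1 : rf (-((m : ℝ) + 1)) (m + 2) = 0 := by
      rw [show -((m : ℝ) + 1) = -(((m + 1 : ℕ)) : ℝ) by push_cast; ring]
      exact rf_neg_nat _ _ (by omega)
    have hz0 : rf (-(m : ℝ)) (m + 2) = 0 := rf_neg_nat _ _ (by omega)
    have hz2 : rf (-((m : ℝ) + 2)) (m + 2 + 1) = 0 := by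
      rw [show -((m : ℝ) + 2) = -(((m + 2 : ℕ)) : ℝ) by push_cast; ring]
      exact rf_neg_nat _ _ (by omega)
    unfold cfun Rfun
    rw [hz1, hz0, hz2]
    push_cast
    ring

lemma key_sum (a b x η w z : ℝ) (m : ℕ) (ha : a ≠ 0)
    (hA : (1 + a) * (x * η) = a * η ^ 2 + 1)
    (hB : a * η ^ 2 * z = a * η ^ 2 - 1)
    (hC : a * η ^ 2 * (w * z) = b * (η ^ 2 - x * η))
    (hba : ∀ j ≤ m + 2, rf (b / a) j ≠ 0) :
    ∑ k ∈ Finset.range (m + 3), cfun a b x η m k * gfun a b w z k = 0 := by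
  have h1 : ((m : ℝ) + 2) * ∑ k ∈ Finset.range (m + 3), cfun a b x η m k * gfun a b w z k =
      (fun k => Rfun a b η m k * gfun a b w z k) (m + 3)
        - (fun k => Rfun a b η m k * gfun a b w z k) 0 := by
    rw [Finset.mul_sum, ← Finset.sum_range_sub (fun k => Rfun a b η m k * gfun a b w z k) (m + 3)]
    refine Finset.sum_congr rfl fun k hk => ?_
    exact step_lemma a b x η w z m k ha hA hB hC hba (by
      have := Finset.mem_range.1 hk; omega)
  simp only at h1
  have hz2 : rf (-((m : ℝ) + 2)) (m + 3) = 0 := by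
    rw [show -((m : ℝ) + 2) = -(((m + 2 : ℕ)) : ℝ) by push_cast; ring]
    exact rf_neg_nat _ _ (by omega)
  simp only [Rfun, hz2, Nat.cast_zero, mul_zero, zero_mul, sub_zero] at h1
  have hm2 : ((m : ℝ) + 2) ≠ 0 := by positivity
  have := mul_eq_zero.1 h1
  tauto

lemma pollaczek_eq (a b x : ℝ) (j : ℕ) :
    pollaczek a b j x =
      etaP a x ^ j * ∑ k ∈ Finset.range (j + 1),
        rf (-(j : ℝ)) k *
          gfun a b (b * (x - etaP a x) / xiP a x) (-xiP a x / (a * etaP a x)) k := by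
  unfold pollaczek gfun
  congr 1
  exact Finset.sum_congr rfl fun k _ => by ring


theorem pollaczek_three_term (n : ℕ) (hn : 1 ≤ n) (a b x : ℝ)
    (ha : a ≠ 0) (hx : (1 + a) ^ 2 * x ^ 2 - 4 * a > 0)
    (hxi : xiP a x ≠ 0) (heta : etaP a x ≠ 0)
    (hdenom : (1 + a) * n + b ≠ 0)
    (hba : ∀ k ≤ n + 1, rf (b / a) k ≠ 0) :
    x * pollaczek a b n x =
      ((a * n + b) / ((1 + a) * n + b)) * pollaczek a b (n + 1) x +
        ((n : ℝ) / ((1 + a) * n + b)) * pollaczek a b (n - 1) x := by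
  obtain ⟨m, rfl⟩ : ∃ m, n = m + 1 := ⟨n - 1, (Nat.succ_pred_eq_of_pos hn).symm⟩
  set ξ := xiP a x with hξdef
  set η := etaP a x with hηdef
  set z : ℝ := -ξ / (a * η) with hzdef
  set w : ℝ := b * (x - η) / ξ with hwdef
  have haη : a * η ≠ 0 := mul_ne_zero ha heta
  have hz : z * (a * η) = -ξ := by rw [hzdef]; field_simp
  have hw : w * ξ = b * (x - η) := by rw [hwdef]; field_simp
  have hξsq : ξ ^ 2 = (1 + a) ^ 2 * x ^ 2 - 4 * a := Real.sq_sqrt hx.le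
  have h2aη : 2 * a * η = (1 + a) * x - ξ := by
    rw [hηdef, etaP, ← hξdef]
    field_simp
  have hA : (1 + a) * (x * η) = a * η ^ 2 + 1 := by
    have h4 : (4 * a) * ((1 + a) * (x * η)) = (4 * a) * (a * η ^ 2 + 1) := by
      linear_combination (ξ - 2 * a * η + (1 + a) * x) * h2aη - hξsq
    have h4a : (4 : ℝ) * a ≠ 0 := by simpa using ha
    exact mul_left_cancel₀ h4a h4
  have hB : a * η ^ 2 * z = a * η ^ 2 - 1 := by
    linear_combination η * hz - η * h2aη - hA
  have hC : a * η ^ 2 * (w * z) = b * (η ^ 2 - x * η) := by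
    linear_combination w * η * hz - η * hw
  have hba' : ∀ j ≤ m + 2, rf (b / a) j ≠ 0 := fun j hj => hba j hj
  have key := key_sum a b x η w z m ha hA hB hC hba'
  have hDm : (1 + a) * ((m : ℝ) + 1) + b ≠ 0 := by push_cast at hdenom; exact hdenom
  have hz1 : rf (-((m : ℝ) + 1)) (m + 2) = 0 := by
    rw [show -((m : ℝ) + 1) = -(((m + 1 : ℕ)) : ℝ) by push_cast; ring]
    exact rf_neg_nat _ _ (by omega)
  have hz0a : rf (-(m : ℝ)) (m + 1) = 0 := rf_neg_nat _ _ (by omega)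
  have hz0b : rf (-(m : ℝ)) (m + 2) = 0 := rf_neg_nat _ _ (by omega)
  have S1 : ∑ k ∈ Finset.range (m + 3), rf (-((m : ℝ) + 1)) k * gfun a b w z k
      = ∑ k ∈ Finset.range (m + 2), rf (-((m : ℝ) + 1)) k * gfun a b w z k := by
    rw [Finset.sum_range_succ, hz1, zero_mul, add_zero]
  have S0 : ∑ k ∈ Finset.range (m + 3), rf (-(m : ℝ)) k * gfun a b w z k
      = ∑ k ∈ Finset.range (m + 1), rf (-(m : ℝ)) k * gfun a b w z k := by
    rw [Finset.sum_range_succ, Finset.sum_range_succ, hz0b, hz0a, zero_mul, add_zero,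
      zero_mul, add_zero]
  have expand : ∑ k ∈ Finset.range (m + 3), cfun a b x η m k * gfun a b w z k
      = ((1 + a) * ((m : ℝ) + 1) + b) * (x * η) *
          (∑ k ∈ Finset.range (m + 3), rf (-((m : ℝ) + 1)) k * gfun a b w z k)
        - (a * ((m : ℝ) + 1) + b) * η ^ 2 *
          (∑ k ∈ Finset.range (m + 3), rf (-((m : ℝ) + 2)) k * gfun a b w z k)
        - ((m : ℝ) + 1) *
          (∑ k ∈ Finset.range (m + 3), rf (-(m : ℝ)) k * gfun a b w z k) := by
    rw [Finset.mul_sum, Finset.mul_sum, Finset.mul_sum, ← Finset.sum_sub_distrib,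
      ← Finset.sum_sub_distrib]
    exact Finset.sum_congr rfl fun k _ => by simp only [cfun]; ring
  rw [expand] at key
  simp only [Nat.add_sub_cancel, show m + 1 + 1 = m + 2 from rfl]
  rw [pollaczek_eq a b x (m + 1), pollaczek_eq a b x (m + 2), pollaczek_eq a b x m]
  rw [← hξdef, ← hηdef, ← hwdef, ← hzdef]
  push_cast
  rw [← S1, ← S0]
  rw [div_mul_eq_mul_div, div_mul_eq_mul_div, ← add_div, eq_div_iff hDm]
  linear_combination (η ^ m) * key
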